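/- Let μ ≠ 0, ρ ∈ ℝ, and let κ : I → ℝ be a twice differentiable nowhere-vanishing function on an interval I satisfying the Euler–Lagrange equation EL(μ,ρ). Then x(s) := exp(μ/κ(s)) takes values in (0,∞)\{1} and satisfies the second-order equation x''(s) = (−μ²x² − ρx²(log x)² + ρx² log x − (x')² log x)/(x (log x)²) (all functions evaluated at s), i.e. (x, x') solves the phase-plane system x' = y, y' = Q₂(x,y) with Q₂(x,y) = (−μ²x² − ρx²(log x)² + ρx² log x − y² log x)/(x(log x)²). -/

import Mathlib

/-- The second component `Q₂(x,y)` of the phase-plane vector field associated to the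
Euler–Lagrange equation of the curvature energy `Θ_μ` in the 2-space form of curvature `ρ`,
in the variables `x = e^{μ/κ}`, `y = x'`. -/
noncomputable def phaseQ₂ (μ ρ x y : ℝ) : ℝ :=
  (-μ ^ 2 * x ^ 2 - ρ * x ^ 2 * (Real.log x) ^ 2 + ρ * x ^ 2 * Real.log x
    - y ^ 2 * Real.log x) / (x * (Real.log x) ^ 2)

/-- If a twice differentiable nowhere-vanishing `κ` on an interval `I` satisfies the
Euler–Lagrange equation `EL(μ,ρ)`, then `x = e^{μ/κ}` takes values in `(0,∞) \ {1}` and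
`(x, x')` solves the phase-plane system `x' = y`, `y' = Q₂(x,y)`. -/
theorem EL_phase_plane (μ ρ : ℝ) (hμ : μ ≠ 0) (I : Set ℝ) (hIopen : IsOpen I)
    (hIconn : I.OrdConnected)
    (κ : ℝ → ℝ) (hκ0 : ∀ s ∈ I, κ s ≠ 0)
    (hκ1 : ∀ s ∈ I, DifferentiableAt ℝ κ s)
    (hκ2 : ∀ s ∈ I, DifferentiableAt ℝ (deriv κ) s)
    (hEL : ∀ s ∈ I,
      deriv (deriv (fun t => (1 - μ / κ t) * Real.exp (μ / κ t))) s
        + (ρ * (1 - μ / κ s) - μ * κ s) * Real.exp (μ / κ s) = 0) :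
    ∀ s ∈ I,
      Real.exp (μ / κ s) ∈ Set.Ioi (0 : ℝ) \ {1} ∧
      deriv (deriv (fun t => Real.exp (μ / κ t))) s =
        phaseQ₂ μ ρ (Real.exp (μ / κ s)) (deriv (fun t => Real.exp (μ / κ t)) s) := by
  intro s hs
  -- notation
  set u : ℝ → ℝ := fun t => μ / κ t with hu_def
  set v : ℝ → ℝ := fun t => -(μ * deriv κ t) / κ t ^ 2 with hv_def
  have hu : ∀ t ∈ I, HasDerivAt u (v t) t := by
    intro t ht
    have h1 : HasDerivAt (fun t => μ * (κ t)⁻¹) (μ * (-(deriv κ t) / κ t ^ 2)) t :=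
      (((hκ1 t ht).hasDerivAt).inv (hκ0 t ht)).const_mul μ
    have : HasDerivAt u (μ * (-(deriv κ t) / κ t ^ 2)) t := by
      simpa [hu_def, div_eq_mul_inv] using h1
    convert this using 1
    ring
  have hderivu : ∀ t ∈ I, deriv u t = v t := fun t ht => (hu t ht).deriv
  have hvdiff : ∀ t ∈ I, DifferentiableAt ℝ v t := by
    intro t ht
    exact (((differentiableAt_const μ).mul (hκ2 t ht)).neg).div
      ((hκ1 t ht).pow 2) (pow_ne_zero 2 (hκ0 t ht))
  set U : ℝ := u s with hU_def
  set E : ℝ := Real.exp U with hE_def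
  set B : ℝ := v s with hB_def
  set A : ℝ := deriv v s with hA_def
  have hUne : U ≠ 0 := div_ne_zero hμ (hκ0 s hs)
  have hEne : E ≠ 0 := Real.exp_ne_zero U
  have hκU : U * κ s = μ := by
    exact div_mul_cancel₀ μ (hκ0 s hs)
  -- membership
  refine ⟨⟨Real.exp_pos _, ?_⟩, ?_⟩
  · simp only [Set.mem_singleton_iff]
    rw [Real.exp_eq_one_iff]
    exact hUne
  -- derivatives of g = exp ∘ u
  have hgI : ∀ t ∈ I, deriv (fun t => Real.exp (u t)) t = Real.exp (u t) * v t :=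
    fun t ht => ((hu t ht).exp).deriv
  have hnhds : I ∈ nhds s := hIopen.mem_nhds hs
  have hgev : deriv (fun t => Real.exp (u t)) =ᶠ[nhds s] fun t => Real.exp (u t) * v t :=
    Filter.eventuallyEq_of_mem hnhds hgI
  have hg2 : HasDerivAt (fun t => Real.exp (u t) * v t) (E * B * B + E * A) s :=
    ((hu s hs).exp).mul (hvdiff s hs).hasDerivAt
  have hddg : deriv (deriv (fun t => Real.exp (u t))) s = E * B * B + E * A := by
    rw [hgev.deriv_eq]
    exact hg2.deriv
  have hdg : deriv (fun t => Real.exp (u t)) s = E * B := hgI s hs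
  -- derivatives of f = (1-u) * exp ∘ u
  have hfI : ∀ t ∈ I, deriv (fun t => (1 - u t) * Real.exp (u t)) t
      = -(v t) * Real.exp (u t) + (1 - u t) * (Real.exp (u t) * v t) := by
    intro t ht
    have : HasDerivAt (fun t => (1 - u t) * Real.exp (u t))
        ((0 - v t) * Real.exp (u t) + (1 - u t) * (Real.exp (u t) * v t)) t :=
      ((hasDerivAt_const t (1:ℝ)).sub (hu t ht)).mul (hu t ht).exp
    rw [this.deriv]; ring
  have hfev : deriv (fun t => (1 - u t) * Real.exp (u t)) =ᶠ[nhds s]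
      fun t => -(v t) * Real.exp (u t) + (1 - u t) * (Real.exp (u t) * v t) :=
    Filter.eventuallyEq_of_mem hnhds hfI
  have hf2 : HasDerivAt (fun t => -(v t) * Real.exp (u t) + (1 - u t) * (Real.exp (u t) * v t))
      ((-A) * E + (-B) * (E * B) + ((0 - B) * (E * B) + (1 - U) * (E * B * B + E * A))) s :=
    (((hvdiff s hs).hasDerivAt.neg).mul (hu s hs).exp).add
      (((hasDerivAt_const s (1:ℝ)).sub (hu s hs)).mul (((hu s hs).exp).mul (hvdiff s hs).hasDerivAt))
  have hEL' : ((-A) * E + (-B) * (E * B) + ((0 - B) * (E * B) + (1 - U) * (E * B * B + E * A)))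
      + (ρ * (1 - U) - μ * κ s) * E = 0 := by
    have := hEL s hs
    rwa [hfev.deriv_eq, hf2.deriv] at this
  -- conclusion
  rw [hddg, hdg, phaseQ₂]
  have hlog : Real.log E = U := by rw [hE_def, Real.log_exp]
  rw [hlog]
  clear_value A B E U
  field_simp
  have hX : B^2*U + B^2*U^2 + A*U^2 - U*ρ + U^2*ρ + μ^2 = 0 := by
    have h : E * (B^2*U + B^2*U^2 + A*U^2 - U*ρ + U^2*ρ + μ^2) = 0 := by
      linear_combination (-U) * hEL' + (-(E*μ)) * hκU
    exact (mul_eq_zero.mp h).resolve_left hEne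
  linear_combination hX
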